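/- Let P be a 0-1 matrix with k rows and c columns, no row all zeroes, that avoids the 2 × 2 all-ones pattern, the pattern [[1,0,1],[0,1,1]], and its horizontal reflection [[0,1,1],[1,0,1]]. Then P has at most k + c - 1 ones. -/

import Mathlib

/-- A 0-1 matrix `M` contains the pattern `P` if there are strictly increasing
row and column maps sending 1-entries of `P` to 1-entries of `M`. -/
def Contains {a b m n : ℕ} (P : Fin a → Fin b → Bool) (M : Fin m → Fin n → Bool) : Prop :=
  ∃ (f : Fin a → Fin m) (g : Fin b → Fin n), StrictMono f ∧ StrictMono g ∧
    ∀ i j, P i j = true → M (f i) (g j) = true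

/-- The number of ones of a 0-1 matrix. -/
def ones {m n : ℕ} (M : Fin m → Fin n → Bool) : ℕ :=
  (Finset.univ.filter fun p : Fin m × Fin n => M p.1 p.2 = true).card

/-- The extremal function `ex(n, P)`: the maximum number of ones in an
`n × n` 0-1 matrix avoiding `P`. -/
noncomputable def exF {a b : ℕ} (n : ℕ) (P : Fin a → Fin b → Bool) : ℕ :=
  sSup {t | ∃ M : Fin n → Fin n → Bool, ¬ Contains P M ∧ ones M = t}

/-- The `2 × 2` all-ones pattern. -/
def patR : Fin 2 → Fin 2 → Bool := fun _ _ => true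

/-- The pattern `[[1,0,1],[0,1,1]]`. -/
def patQ : Fin 2 → Fin 3 → Bool := fun i j =>
  if i = 0 then decide (j ≠ 1) else decide (j ≠ 0)

/-- The pattern `[[0,1,1],[1,0,1]]`, the reflection of `patQ` over a horizontal line. -/
def patQbar : Fin 2 → Fin 3 → Bool := fun i j =>
  if i = 0 then decide (j ≠ 0) else decide (j ≠ 1)

lemma smono2 {n : ℕ} {f : Fin 2 → Fin n} (h : f 0 < f 1) : StrictMono f := by
  intro i j hij
  fin_cases i <;> fin_cases j <;> simp_all

lemma smono3 {n : ℕ} {f : Fin 3 → Fin n} (h01 : f 0 < f 1) (h12 : f 1 < f 2) :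
    StrictMono f := by
  intro i j hij
  fin_cases i <;> fin_cases j <;> simp_all
  exact h01.trans h12

/-- A 0-1 matrix with `k` rows and `c` columns, no all-zero row, avoiding the
`2 × 2` all-ones pattern, `[[1,0,1],[0,1,1]]` and `[[0,1,1],[1,0,1]]`, has at
most `k + c - 1` ones. -/
theorem stmt_8 (k c : ℕ) (P : Fin k → Fin c → Bool)
    (hR : ¬ Contains patR P) (hQ : ¬ Contains patQ P) (hQbar : ¬ Contains patQbar P)
    (hrow : ∀ r, ∃ j, P r j = true) :
    ones P ≤ k + c - 1 := by
  rcases c with _ | c'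
  · simp [ones]
  have hne : ∀ r, (Finset.univ.filter fun j => P r j = true).Nonempty := by
    intro r; obtain ⟨j, hj⟩ := hrow r; exact ⟨j, by simp [hj]⟩
  set L : Fin k → Fin (c' + 1) := fun r =>
    (Finset.univ.filter fun j => P r j = true).min' (hne r) with hL
  have hPL : ∀ r, P r (L r) = true := by
    intro r
    have := (Finset.univ.filter fun j => P r j = true).min'_mem (hne r)
    simpa using this
  have hLle : ∀ r j, P r j = true → L r ≤ j := by
    intro r j hj
    exact Finset.min'_le _ _ (by simp [hj])
  have key : ∀ (r1 r2 : Fin k) (j : Fin (c' + 1)), r1 < r2 → P r1 j = true →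
      P r2 j = true → L r1 < j → L r2 < j → False := by
    intro r1 r2 j h12 h1 h2 hL1 hL2
    rcases lt_trichotomy (L r1) (L r2) with h | h | h
    · exact hQ ⟨![r1, r2], ![L r1, L r2, j], smono2 (by simp [h12]),
        smono3 (by simp [h]) (by simp [hL2]),
        by intro i jj; fin_cases i <;> fin_cases jj <;>
           simp [patQ, hPL, h1, h2]⟩
    · exact hR ⟨![r1, r2], ![L r1, j], smono2 (by simp [h12]), smono2 (by simp [hL1]),
        by intro i jj; fin_cases i <;> fin_cases jj <;>
           simp [patR, hPL, h1, h2, h ▸ hPL r2]⟩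
    · exact hQbar ⟨![r1, r2], ![L r2, L r1, j], smono2 (by simp [h12]),
        smono3 (by simp [h]) (by simp [hL1]),
        by intro i jj; fin_cases i <;> fin_cases jj <;>
           simp [patQbar, hPL, h1, h2]⟩
  classical
  set S := Finset.univ.filter fun p : Fin k × Fin (c' + 1) => P p.1 p.2 = true with hS
  have hsplit := Finset.card_filter_add_card_filter_not
    (s := S) (p := fun p => p.2 = L p.1)
  have hA : (S.filter fun p => p.2 = L p.1).card ≤ k := by
    calc (S.filter fun p => p.2 = L p.1).card
        ≤ (Finset.univ : Finset (Fin k)).card := by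
          apply Finset.card_le_card_of_injOn Prod.fst (fun _ _ => Finset.mem_univ _)
          intro p hp q hq hpq
          simp only [Finset.mem_coe, Finset.mem_filter] at hp hq
          exact Prod.ext hpq (by rw [hp.2, hq.2, hpq])
      _ = k := by simp
  have hB : (S.filter fun p => ¬ p.2 = L p.1).card ≤ c' := by
    calc (S.filter fun p => ¬ p.2 = L p.1).card
        ≤ ((Finset.univ : Finset (Fin (c' + 1))).erase 0).card := by
          apply Finset.card_le_card_of_injOn Prod.snd
          · intro p hp
            simp only [Finset.mem_coe, Finset.mem_filter, hS, Finset.mem_univ, true_and] at hp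
            have hlt : L p.1 < p.2 := lt_of_le_of_ne (hLle _ _ hp.1) (Ne.symm hp.2)
            have : (0 : Fin (c' + 1)) < p.2 := lt_of_le_of_lt (Fin.zero_le _) hlt
            exact Finset.mem_erase.2 ⟨Fin.pos_iff_ne_zero.mp this, Finset.mem_univ _⟩
          · intro p hp q hq hpq
            simp only [Finset.mem_coe, Finset.mem_filter, hS, Finset.mem_univ,
              true_and] at hp hq
            have hp' : L p.1 < p.2 := lt_of_le_of_ne (hLle _ _ hp.1) (Ne.symm hp.2)
            have hq' : L q.1 < q.2 := lt_of_le_of_ne (hLle _ _ hq.1) (Ne.symm hq.2)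
            rcases lt_trichotomy p.1 q.1 with h | h | h
            · exact absurd (key p.1 q.1 p.2 h hp.1 (hpq ▸ hq.1) hp' (hpq ▸ hq')) (by simp)
            · exact Prod.ext h hpq
            · exact absurd (key q.1 p.1 p.2 h (hpq ▸ hq.1) hp.1 (hpq ▸ hq') hp') (by simp)
      _ = c' := by simp
  have hones : ones P = S.card := rfl
  omega
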